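/- Let N ≥ 2, let s ≥ 0 be a real number, and let Γ be a set of N nonnegative integers. Then the generalized Vandermonde matrix with entries (s+j)^{γ_i}, where j ranges over 0,...,N-1 and γ_i over the elements of Γ, is invertible, provided s > 0 (or s ≥ 0 with 0 ∈ Γ). -/

import Mathlib

open Set Finset

lemma key : ∀ (n : ℕ) (γ : Fin n → ℕ), StrictMono γ → ∀ (c : Fin n → ℝ) (x : Fin n → ℝ),
    StrictMono x → (∀ j, 0 < x j) → (∀ j, ∑ i, c i * x j ^ γ i = 0) → ∀ i, c i = 0 := by
  intro n
  induction n with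
  | zero => intro _ _ _ _ _ _ _ i; exact i.elim0
  | succ n ih =>
    intro γ hγ c x hx hx0 hroot
    set g : ℝ → ℝ := fun t => ∑ i, c i * t ^ (γ i - γ 0) with hgdef
    have hγ0 : ∀ i, γ 0 ≤ γ i := fun i => hγ.monotone (Fin.zero_le i)
    have hgroot : ∀ j, g (x j) = 0 := by
      intro j
      have h1 : x j ^ (γ 0) * g (x j) = ∑ i, c i * x j ^ γ i := by
        rw [hgdef]
        simp only
        rw [Finset.mul_sum]
        refine Finset.sum_congr rfl fun i _ => ?_
        rw [← mul_assoc, mul_comm (x j ^ γ 0), mul_assoc, ← pow_add,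
          Nat.add_sub_cancel' (hγ0 i)]
      rw [hroot j] at h1
      have := pow_ne_zero (γ 0) (hx0 j).ne'
      exact (mul_eq_zero.1 h1).resolve_left this
    have hderiv : ∀ t, HasDerivAt g
        (∑ i : Fin (n+1), c i * (((γ i - γ 0 : ℕ) : ℝ) * t ^ (γ i - γ 0 - 1))) t := by
      intro t
      exact HasDerivAt.fun_sum fun i _ => (hasDerivAt_pow _ t).const_mul (c i)
    set d : Fin n → ℝ := fun i => c i.succ * ((γ i.succ - γ 0 : ℕ) : ℝ) with hddef
    set δ : Fin n → ℕ := fun i => γ i.succ - γ 0 - 1 with hδdef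
    have hderiv' : ∀ t, HasDerivAt g (∑ i : Fin n, d i * t ^ δ i) t := by
      intro t
      have := hderiv t
      rwa [Fin.sum_univ_succ, Nat.sub_self, Nat.cast_zero, zero_mul, mul_zero, zero_add,
        show (∑ i : Fin n, c i.succ * (((γ i.succ - γ 0 : ℕ) : ℝ) * t ^ (γ i.succ - γ 0 - 1)))
          = ∑ i : Fin n, d i * t ^ δ i from Finset.sum_congr rfl fun i _ => by
            rw [hddef, hδdef]; ring] at this
    have hrolle : ∀ j : Fin n, ∃ y ∈ Ioo (x j.castSucc) (x j.succ),
        (∑ i : Fin n, d i * y ^ δ i) = 0 := by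
      intro j
      refine exists_hasDerivAt_eq_zero (hx (show j.castSucc < j.succ from Fin.castSucc_lt_succ))
        (fun t _ => ((hderiv' t).continuousAt).continuousWithinAt)
        (by rw [hgroot, hgroot]) (fun t _ => hderiv' t)
    choose y hy1 hy2 using hrolle
    have hysm : StrictMono y := by
      intro a b hab
      calc y a < x a.succ := (hy1 a).2
        _ ≤ x b.castSucc := hx.monotone (by
            rw [Fin.le_def]
            simpa using hab)
        _ < y b := (hy1 b).1
    have hypos : ∀ j, 0 < y j := fun j => (hx0 j.castSucc).trans (hy1 j).1
    have hδsm : StrictMono δ := by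
      intro a b hab
      have h1 := hγ (show (0 : Fin (n+1)) < a.succ from a.succ_pos)
      have h2 := hγ (Fin.succ_lt_succ_iff.2 hab)
      simp only [hδdef]
      omega
    have hd0 : ∀ i, d i = 0 := ih δ hδsm d y hysm hypos hy2
    have hcs : ∀ i : Fin n, c i.succ = 0 := by
      intro i
      have h1 := hγ (show (0 : Fin (n+1)) < i.succ from i.succ_pos)
      have h2 : ((γ i.succ - γ 0 : ℕ) : ℝ) ≠ 0 := by
        simp only [ne_eq, Nat.cast_eq_zero]
        omega
      have := hd0 i
      rw [hddef] at this
      exact (mul_eq_zero.1 this).resolve_right h2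
    have hc0 : c 0 = 0 := by
      have h := hroot 0
      rw [Fin.sum_univ_succ] at h
      have : ∑ i : Fin n, c i.succ * x 0 ^ γ i.succ = 0 :=
        Finset.sum_eq_zero fun i _ => by rw [hcs i, zero_mul]
      rw [this, add_zero] at h
      exact (mul_eq_zero.1 h).resolve_right (pow_ne_zero _ (hx0 0).ne')
    intro i
    refine Fin.cases hc0 hcs i
theorem stmt_6 (N : ℕ) (hN : 2 ≤ N) (s : ℝ)
    (γ : Fin N → ℕ) (hγ : StrictMono γ)
    (hs : 0 < s ∨ (0 ≤ s ∧ (0 : ℕ) ∈ Set.range γ)) :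
    (Matrix.of fun i j : Fin N => (s + (j : ℕ)) ^ γ i).det ≠ 0 := by
  obtain ⟨m, rfl⟩ : ∃ m, N = m + 2 := ⟨N - 2, by omega⟩
  intro hdet
  obtain ⟨v, hv, hveq⟩ := (Matrix.exists_vecMul_eq_zero_iff).2 hdet
  have hveq' : ∀ j : Fin (m + 2), ∑ i, v i * (s + (j : ℕ)) ^ γ i = 0 := by
    intro j
    have := congrFun hveq j
    simpa [Matrix.vecMul, dotProduct] using this
  rcases hs with hspos | ⟨hsnn, hγ0'⟩
  · have := key (m + 2) γ hγ v (fun j => s + (j : ℕ))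
      (fun a b hab => by
        have : (a : ℕ) < (b : ℕ) := hab
        have : ((a : ℕ) : ℝ) < ((b : ℕ) : ℝ) := by exact_mod_cast this
        dsimp only; linarith)
      (fun j => by positivity) hveq'
    exact hv (funext this)
  · rcases lt_or_eq_of_le hsnn with hspos | hs0
    · have := key (m + 2) γ hγ v (fun j => s + (j : ℕ))
        (fun a b hab => by
          have : (a : ℕ) < (b : ℕ) := hab
          have : ((a : ℕ) : ℝ) < ((b : ℕ) : ℝ) := by exact_mod_cast this
          dsimp only; linarith)
        (fun j => by positivity) hveq'
      exact hv (funext this)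
    subst hs0
    -- s = 0 (hs0 : 0 = s, subst gives s := 0)
    obtain ⟨i0, hi0⟩ := hγ0'
    have hγzero : γ 0 = 0 := Nat.le_zero.1 (hi0 ▸ hγ.monotone (Fin.zero_le i0))
    have hγpos : ∀ i : Fin (m + 2), i ≠ 0 → 0 < γ i := by
      intro i hi
      have : (0 : Fin (m + 2)) < i := Fin.pos_of_ne_zero hi
      have := hγ this
      omega
    have hv0 : v 0 = 0 := by
      have h := hveq' 0
      rw [Fin.sum_univ_succ] at h
      simp only [Fin.val_zero, Nat.cast_zero, add_zero, zero_add] at h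
      rw [hγzero, pow_zero, mul_one] at h
      have hz : ∑ i : Fin (m + 1), v i.succ * (0 : ℝ) ^ γ i.succ = 0 :=
        Finset.sum_eq_zero fun i _ => by
          rw [zero_pow (by exact (hγpos i.succ (Fin.succ_ne_zero i)).ne'), mul_zero]
      rw [hz, add_zero] at h
      exact h
    have hrest : ∀ i : Fin (m + 1), v i.succ = 0 := by
      refine key (m + 1) (fun i => γ i.succ)
        (fun a b hab => hγ (Fin.succ_lt_succ_iff.2 hab))
        (fun i => v i.succ) (fun j => ((j : ℕ) : ℝ) + 1)
        (fun a b hab => by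
          have : (a : ℕ) < (b : ℕ) := hab
          have : ((a : ℕ) : ℝ) < ((b : ℕ) : ℝ) := by exact_mod_cast this
          dsimp only; linarith)
        (fun j => by positivity) ?_
      intro j
      have h := hveq' j.succ
      rw [Fin.sum_univ_succ, hv0, zero_mul, zero_add] at h
      have hval : ((j.succ : ℕ) : ℝ) = ((j : ℕ) : ℝ) + 1 := by
        rw [Fin.val_succ]; push_cast; ring
      rw [← h]
      refine Finset.sum_congr rfl fun i _ => ?_
      rw [zero_add, hval]
    refine hv (funext fun i => ?_)
    refine Fin.cases hv0 hrest i
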